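/- arXiv:2401.02877 — 3 statements merged into one kernel-verified Lean document; each statement's English description precedes it below -/
import Mathlib

section
/- Let H : [0,∞) → [0,∞) be a C¹ function and D : [0,∞) → [0,∞) be continuous with -H' = D on [0,∞). Suppose there exist real numbers q, c₀ > 0 such that for all t, if D(t) ≤ q then D(t) ≥ c₀·H(t). Then for all t ≥ H(0)/q, one has H(t) ≤ H(0)·exp(c₀·H(0)/q)·exp(-c₀·t). -/
open MeasureTheory Real Set

private lemma anti_of_deriv {f f' : ℝ → ℝ} {a : ℝ}
    (h : ∀ x ∈ Ici a, HasDerivAt f (f' x) x)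
    (h' : ∀ x ∈ Ioi a, f' x ≤ 0) : AntitoneOn f (Ici a) := by
  apply antitoneOn_of_deriv_nonpos (convex_Ici a)
  · exact fun x hx => (h x hx).continuousAt.continuousWithinAt
  · intro x hx
    rw [interior_Ici] at hx
    exact (h x (mem_Ici.2 (le_of_lt (mem_Ioi.1 hx)))).differentiableAt.differentiableWithinAt
  · intro x hx
    rw [interior_Ici] at hx
    rw [(h x (mem_Ici.2 (le_of_lt (mem_Ioi.1 hx)))).deriv]
    exact h' x hx

theorem landau_exp_decay
    (H D : ℝ → ℝ) (q c₀ : ℝ)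
    (hHnn : ∀ t ≥ 0, 0 ≤ H t)
    (hDnn : ∀ t ≥ 0, 0 ≤ D t)
    (hderiv : ∀ t ≥ 0, HasDerivAt H (-(D t)) t)
    (hDcont : ContinuousOn D (Ici 0))
    (hq : 0 < q) (hc₀ : 0 < c₀)
    (hkey : ∀ t ≥ 0, D t ≤ q → c₀ * H t ≤ D t) :
    ∀ t ≥ H 0 / q, H t ≤ H 0 * Real.exp (c₀ * H 0 / q) * Real.exp (-c₀ * t) := by
  set ts := H 0 / q with hts
  have hH0 : 0 ≤ H 0 := hHnn 0 le_rfl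
  have hts0 : 0 ≤ ts := div_nonneg hH0 hq.le
  -- H is antitone on [0,∞)
  have hanti : AntitoneOn H (Ici 0) :=
    anti_of_deriv (f' := fun t => -(D t)) (fun x hx => hderiv x hx)
      (fun x hx => neg_nonpos.2 (hDnn x (le_of_lt hx)))
  -- H ts ≤ q / c₀
  have hHts : H ts ≤ q / c₀ := by
    by_contra hcon
    push_neg at hcon
    -- on [0, ts], D s > q
    have hDgt : ∀ s, 0 ≤ s → s ≤ ts → q ≤ D s := by
      intro s hs hsts
      by_contra hD
      push_neg at hD
      have h1 := hkey s hs hD.le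
      have h2 : H ts ≤ H s := hanti hs (le_trans hs hsts) hsts
      have : q / c₀ < H s := lt_of_lt_of_le hcon h2
      have : q < c₀ * H s := by rw [div_lt_iff₀ hc₀] at this; linarith
      linarith
    -- s ↦ H s + q * s antitone on [0, ts] via Ici 0? derivative -(D s) + q ≤ 0 only on (0, ts)
    have hmono : AntitoneOn (fun s => H s + q * s) (Icc 0 ts) := by
      apply antitoneOn_of_deriv_nonpos (convex_Icc 0 ts)
      · intro x hx
        exact (((hderiv x hx.1).add ((hasDerivAt_id x).const_mul q)).continuousAt).continuousWithinAt
      · intro x hx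
        rw [interior_Icc] at hx
        exact (((hderiv x hx.1.le).add ((hasDerivAt_id x).const_mul q)).differentiableAt).differentiableWithinAt
      · intro x hx
        rw [interior_Icc] at hx
        have hd : HasDerivAt (fun s => H s + q * s) (-D x + q) x := by
          exact ((hderiv x hx.1.le).add ((hasDerivAt_id x).const_mul q)).congr_deriv (by ring)
        rw [hd.deriv]
        have := hDgt x hx.1.le hx.2.le
        linarith
    have := hmono (left_mem_Icc.2 hts0) (right_mem_Icc.2 hts0) hts0
    simp only [mul_zero, add_zero] at this
    have hqt : q * ts = H 0 := by
      rw [hts]; field_simp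
    have : H ts ≤ 0 := by linarith
    have : 0 < H ts := lt_trans (div_pos hq hc₀) hcon
    linarith
  -- for all s ≥ ts, c₀ * H s ≤ D s
  have hkey' : ∀ s, ts ≤ s → c₀ * H s ≤ D s := by
    intro s hs
    have hs0 : 0 ≤ s := le_trans hts0 hs
    by_cases hD : D s ≤ q
    · exact hkey s hs0 hD
    · push_neg at hD
      have : H s ≤ H ts := hanti hts0 hs0 hs
      have : H s ≤ q / c₀ := le_trans this hHts
      have : c₀ * H s ≤ q := by rw [le_div_iff₀ hc₀] at this; linarith
      linarith
  -- G s = H s * exp (c₀ s) antitone on [ts, ∞)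
  have hG : AntitoneOn (fun s => H s * Real.exp (c₀ * s)) (Ici ts) := by
    apply anti_of_deriv (f' := fun s => -(D s) * Real.exp (c₀ * s) + H s * (c₀ * Real.exp (c₀ * s)))
    · intro x hx
      have h1 : HasDerivAt (fun s => Real.exp (c₀ * s)) (c₀ * Real.exp (c₀ * x)) x := by
        have := (Real.hasDerivAt_exp (c₀ * x)).comp x ((hasDerivAt_id x).const_mul c₀)
        exact this.congr_deriv (by simp only [id, mul_one]; ring)
      exact (hderiv x (le_trans hts0 hx)).mul h1
    · intro x hx
      have h := hkey' x (le_of_lt hx)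
      have hex : 0 < Real.exp (c₀ * x) := Real.exp_pos _
      nlinarith
  intro t ht
  have htts : ts ≤ t := ht
  have h1 : H t * Real.exp (c₀ * t) ≤ H ts * Real.exp (c₀ * ts) :=
    hG (mem_Ici.2 le_rfl) (mem_Ici.2 htts) htts
  have h2 : H ts * Real.exp (c₀ * ts) ≤ H 0 * Real.exp (c₀ * ts) :=
    mul_le_mul_of_nonneg_right (hanti (mem_Ici.2 le_rfl) (mem_Ici.2 hts0) hts0)
      (Real.exp_pos _).le
  have key : H t * Real.exp (c₀ * t) ≤ H 0 * Real.exp (c₀ * H 0 / q) := by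
    rw [mul_div_assoc]; exact h1.trans h2
  calc H t = H t * Real.exp (c₀ * t) * Real.exp (-(c₀ * t)) := by
        rw [mul_assoc, ← Real.exp_add, add_neg_cancel, Real.exp_zero, mul_one]
    _ ≤ H 0 * Real.exp (c₀ * H 0 / q) * Real.exp (-(c₀ * t)) :=
        mul_le_mul_of_nonneg_right key (Real.exp_pos _).le
    _ = H 0 * Real.exp (c₀ * H 0 / q) * Real.exp (-c₀ * t) := by rw [neg_mul]
end

section
/- Let f : ℝ³ → [0,∞) be measurable with ∫ f = 1 and ∫ |v|² f(v) dv = 3, and suppose |·|² f ∈ L²(ℝ³). Then for every γ ∈ [0,1], σ_γ(f) := sup_{v ∈ ℝ³} ∫ f(w) |v-w|^{-γ} |w|² dw ≤ 3 + 2√π · ‖ |·|² f ‖_{L²(ℝ³)}. -/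
open MeasureTheory Real Set


lemma aux_integrableOn {s : ℝ} (hs0 : 0 < s) (hs3 : s < 3) :
    IntegrableOn (fun x : EuclideanSpace ℝ (Fin 3) => ‖x‖ ^ (-s)) (Metric.ball 0 1) volume := by
  have hmeas : Measurable fun x : EuclideanSpace ℝ (Fin 3) => ‖x‖ ^ (-s) := by fun_prop
  refine ⟨hmeas.aestronglyMeasurable, ?_⟩
  rw [hasFiniteIntegral_iff_ofReal (ae_of_all _ fun x => by positivity)]
  set μ' := volume.restrict (Metric.ball (0:EuclideanSpace ℝ (Fin 3)) 1) with hμ'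
  rw [lintegral_eq_lintegral_meas_le μ' (ae_of_all _ fun x => by positivity)
    hmeas.aemeasurable]
  have hb1 : ∀ t, t ∈ Ioc (0:ℝ) 1 → μ' {a : EuclideanSpace ℝ (Fin 3) | t ≤ ‖a‖ ^ (-s)} ≤
      volume (Metric.ball (0:EuclideanSpace ℝ (Fin 3)) 1) := fun t _ =>
    (measure_mono (subset_univ _)).trans_eq (by rw [hμ', Measure.restrict_apply_univ])
  have hb2 : ∀ t, t ∈ Ioi (1:ℝ) → μ' {a : EuclideanSpace ℝ (Fin 3) | t ≤ ‖a‖ ^ (-s)} ≤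
      ENNReal.ofReal (t ^ (-(3/s))) * volume (Metric.ball (0:EuclideanSpace ℝ (Fin 3)) 1) := by
    intro t ht
    have ht0 : (0:ℝ) < t := lt_trans one_pos ht
    have hsub : {a : EuclideanSpace ℝ (Fin 3) | t ≤ ‖a‖ ^ (-s)} ⊆
        Metric.closedBall 0 (t ^ (-s⁻¹)) := by
      intro a ha
      simp only [mem_setOf_eq] at ha
      rcases eq_or_ne a 0 with rfl | h0
      · simpa using Real.rpow_nonneg ht0.le _
      · have hna : 0 < ‖a‖ := norm_pos_iff.2 h0
        rw [Metric.mem_closedBall, dist_zero_right, neg_inv]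
        exact (Real.le_rpow_inv_iff_of_neg hna ht0 (neg_lt_zero.2 hs0)).2 ha
    have hfr : Module.finrank ℝ (EuclideanSpace ℝ (Fin 3)) = 3 := by
      simp [finrank_euclideanSpace]
    calc μ' {a : EuclideanSpace ℝ (Fin 3) | t ≤ ‖a‖ ^ (-s)}
        ≤ volume (Metric.closedBall (0:EuclideanSpace ℝ (Fin 3)) (t ^ (-s⁻¹))) :=
          (Measure.restrict_apply_le _ _).trans (measure_mono hsub)
      _ = ENNReal.ofReal ((t ^ (-s⁻¹)) ^ Module.finrank ℝ (EuclideanSpace ℝ (Fin 3))) *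
            volume (Metric.ball (0:EuclideanSpace ℝ (Fin 3)) 1) :=
          Measure.addHaar_closedBall _ _ (Real.rpow_nonneg ht0.le _)
      _ = ENNReal.ofReal (t ^ (-(3/s))) *
            volume (Metric.ball (0:EuclideanSpace ℝ (Fin 3)) 1) := by
          rw [hfr, ← Real.rpow_natCast (t ^ (-s⁻¹)) 3, ← Real.rpow_mul ht0.le]
          norm_num
          ring_nf
  calc ∫⁻ t in Ioi 0, μ' {a : EuclideanSpace ℝ (Fin 3) | t ≤ ‖a‖ ^ (-s)}
      ≤ ∫⁻ t in Ioc 0 1 ∪ Ioi 1, μ' {a : EuclideanSpace ℝ (Fin 3) | t ≤ ‖a‖ ^ (-s)} :=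
        lintegral_mono_set Ioi_subset_Ioc_union_Ioi
    _ ≤ (∫⁻ t in Ioc 0 1, μ' {a : EuclideanSpace ℝ (Fin 3) | t ≤ ‖a‖ ^ (-s)}) +
        ∫⁻ t in Ioi 1, μ' {a : EuclideanSpace ℝ (Fin 3) | t ≤ ‖a‖ ^ (-s)} :=
        lintegral_union_le _ _ _
    _ < ⊤ := by
        refine ENNReal.add_lt_top.2 ⟨?_, ?_⟩
        · refine lt_of_le_of_lt (setLIntegral_mono' measurableSet_Ioc hb1) ?_
          rw [setLIntegral_const]
          exact ENNReal.mul_lt_top measure_ball_lt_top (by simp)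
        · refine lt_of_le_of_lt (setLIntegral_mono' measurableSet_Ioi hb2) ?_
          rw [lintegral_mul_const' _ _ measure_ball_lt_top.ne]
          refine ENNReal.mul_lt_top ?_ measure_ball_lt_top
          have hint : IntegrableOn (fun t : ℝ => t ^ (-(3/s))) (Ioi 1) volume :=
            integrableOn_Ioi_rpow_of_lt (by rw [neg_lt, neg_neg]; exact (one_lt_div hs0).2 hs3)
              one_pos
          have h2 := hint.hasFiniteIntegral
          rwa [hasFiniteIntegral_iff_ofReal ((ae_restrict_mem measurableSet_Ioi).mono
            fun t ht => Real.rpow_nonneg (le_trans zero_le_one (le_of_lt ht)) _)] at h2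


lemma aux_volume_ball :
    (volume (Metric.ball (0 : EuclideanSpace ℝ (Fin 3)) 1)).toReal = 4 * π / 3 := by
  rw [EuclideanSpace.volume_ball]
  have hcard : Fintype.card (Fin 3) = 3 := by simp
  rw [hcard]
  have hsp : (0:ℝ) < √π := Real.sqrt_pos.2 pi_pos
  have h52 : Real.Gamma ((3:ℕ) / 2 + 1) = 3 / 4 * √π := by
    push_cast
    rw [Real.Gamma_add_one (by norm_num), show (3:ℝ)/2 = 1/2 + 1 by norm_num,
      Real.Gamma_add_one (by norm_num), Real.Gamma_one_half_eq]
    ring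
  rw [h52]
  rw [ENNReal.toReal_mul, ENNReal.toReal_pow, ENNReal.toReal_ofReal zero_le_one,
    ENNReal.toReal_ofReal (by positivity)]
  rw [show (√π)^3 = π * √π by rw [pow_succ, sq_sqrt pi_nonneg]]
  field_simp

lemma aux_integral_le {s : ℝ} (hs0 : 0 < s) (hs2 : s ≤ 2) :
    ∫ x in Metric.ball (0 : EuclideanSpace ℝ (Fin 3)) 1, ‖x‖ ^ (-s) ≤ 4 * π := by
  have h3s : (0:ℝ) < 3 - s := by linarith
  set Φ : ℝ → ℝ := (Iio (1:ℝ)).indicator (fun r => r ^ (-s)) with hΦ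
  have step1 : ∫ x in Metric.ball (0 : EuclideanSpace ℝ (Fin 3)) 1, ‖x‖ ^ (-s)
      = ∫ x : EuclideanSpace ℝ (Fin 3), Φ ‖x‖ := by
    rw [← integral_indicator measurableSet_ball]
    refine integral_congr_ae (ae_of_all _ fun x => ?_)
    by_cases hx : ‖x‖ < 1 <;>
      simp [hΦ, Set.indicator_apply, Metric.mem_ball, dist_zero_right, hx]
  have hfr : Module.finrank ℝ (EuclideanSpace ℝ (Fin 3)) = 3 := by
    simp [finrank_euclideanSpace]
  have step2 := integral_fun_norm_addHaar (volume : Measure (EuclideanSpace ℝ (Fin 3))) Φ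
  rw [hfr] at step2
  have step3 : ∫ y in Ioi (0:ℝ), y ^ (3 - 1) • Φ y = 1 / (3 - s) := by
    have e1 : ∀ y : ℝ, y ^ (3-1) • Φ y = (Iio (1:ℝ)).indicator (fun y => y ^ 2 * y ^ (-s)) y := by
      intro y
      by_cases hy : y ∈ Iio (1:ℝ) <;>
        simp [hΦ, indicator_of_mem, indicator_of_notMem, hy]
    simp_rw [e1]
    rw [setIntegral_indicator measurableSet_Iio, Ioi_inter_Iio]
    rw [setIntegral_congr_fun measurableSet_Ioo (g := fun y : ℝ => y ^ (2 - s))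
      (fun y hy => by
        rw [← Real.rpow_natCast y 2, ← Real.rpow_add hy.1]
        norm_num [sub_eq_add_neg])]
    rw [← integral_Ioc_eq_integral_Ioo, ← intervalIntegral.integral_of_le zero_le_one,
      integral_rpow (Or.inl (by linarith))]
    rw [Real.one_rpow, Real.zero_rpow (by linarith)]
    rw [show (2:ℝ) - s + 1 = 3 - s by ring]
    norm_num
  rw [step1, step2, step3, measureReal_def, aux_volume_ball, nsmul_eq_mul, smul_eq_mul]
  rw [show (3:ℕ) * (4 * π / 3 * (1 / (3 - s))) = 4 * π * (1/(3-s)) by push_cast; ring]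
  have h1 : 1/(3-s) ≤ 1 := by rw [div_le_one h3s]; linarith
  have h2 := mul_le_mul_of_nonneg_left h1 (by positivity : (0:ℝ) ≤ 4*π)
  linarith

theorem sigma_gamma_bound
    (f : EuclideanSpace ℝ (Fin 3) → ℝ)
    (hf_nn : ∀ v, 0 ≤ f v)
    (hf_meas : Measurable f)
    (hf_mass : ∫ v, f v = 1)
    (hf_mom2 : ∫ v, ‖v‖ ^ (2 : ℕ) * f v = 3)
    (hf_wL2 : MemLp (fun v => ‖v‖ ^ (2 : ℕ) * f v) 2 volume)
    (γ : ℝ) (hγ : γ ∈ Set.Icc (0 : ℝ) 1) :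
    ∀ v : EuclideanSpace ℝ (Fin 3),
      ∫ w, f w * ‖v - w‖ ^ (-γ) * ‖w‖ ^ (2 : ℕ) ≤
        3 + 2 * Real.sqrt π * (eLpNorm (fun v => ‖v‖ ^ (2 : ℕ) * f v) 2 volume).toReal := by
  intro v
  set g : EuclideanSpace ℝ (Fin 3) → ℝ := fun w => ‖w‖ ^ (2 : ℕ) * f w with hgdef
  set L : ℝ := (eLpNorm g 2 volume).toReal with hLdef
  have hg_nn : ∀ w, 0 ≤ g w := fun w => mul_nonneg (by positivity) (hf_nn w)
  have hg_meas : Measurable g := (measurable_norm.pow_const 2).mul hf_meas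
  have hg_int : Integrable g := by
    by_contra h
    rw [integral_undef h] at hf_mom2
    norm_num at hf_mom2
  have hL_nn : 0 ≤ L := ENNReal.toReal_nonneg
  rcases eq_or_lt_of_le hγ.1 with hγ0 | hγ0
  · -- γ = 0 case
    simp only [← hγ0, neg_zero, Real.rpow_zero, mul_one]
    have : (fun w : EuclideanSpace ℝ (Fin 3) => f w * ‖w‖ ^ (2:ℕ)) = g :=
      funext fun w => mul_comm _ _
    rw [this, hgdef, hf_mom2]
    have : 0 ≤ 2 * √π * L := by positivity
    linarith
  · -- 0 < γ
    have hγ1 : γ ≤ 1 := hγ.2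
    set B := Metric.ball v 1 with hBdef
    set h : EuclideanSpace ℝ (Fin 3) → ℝ := fun w => ‖v - w‖ ^ (-γ) with hhdef
    set F : EuclideanSpace ℝ (Fin 3) → ℝ := fun w => f w * ‖v - w‖ ^ (-γ) * ‖w‖ ^ (2 : ℕ)
      with hFdef
    have hF_eq : ∀ w, F w = g w * h w := fun w => by simp only [hFdef, hgdef, hhdef]; ring
    have hh_meas : Measurable h := by
      rw [hhdef]; fun_prop
    have hh_nn : ∀ w, 0 ≤ h w := fun w => Real.rpow_nonneg (norm_nonneg _) _
    have hF_meas : Measurable F := (hf_meas.mul hh_meas).mul (measurable_norm.pow_const 2)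
    have hF_nn : ∀ w, 0 ≤ F w := fun w =>
      mul_nonneg (mul_nonneg (hf_nn w) (hh_nn w)) (by positivity)
    -- translation
    have e : MeasurePreserving (fun w : EuclideanSpace ℝ (Fin 3) => v - w) volume volume :=
      Measure.measurePreserving_sub_left volume v
    have he_emb : MeasurableEmbedding (fun w : EuclideanSpace ℝ (Fin 3) => v - w) :=
      (MeasurableEquiv.subLeft v).measurableEmbedding
    have hpre : (fun w : EuclideanSpace ℝ (Fin 3) => v - w) ⁻¹' Metric.ball 0 1 = B := by
      ext w
      simp [hBdef, Metric.mem_ball, dist_eq_norm, norm_sub_rev]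
    have h2γ0 : (0:ℝ) < 2 * γ := by linarith
    have h2γ3 : 2 * γ < 3 := by linarith
    have h2γ2 : 2 * γ ≤ 2 := by linarith
    have hh_sq : ∀ w : EuclideanSpace ℝ (Fin 3), h w ^ (2:ℕ) = ‖v - w‖ ^ (-(2*γ)) := by
      intro w
      rw [hhdef]
      rw [← Real.rpow_natCast (‖v - w‖ ^ (-γ)) 2, ← Real.rpow_mul (norm_nonneg _)]
      norm_num
      ring_nf
    have hI_B : IntegrableOn (fun w : EuclideanSpace ℝ (Fin 3) => ‖v - w‖ ^ (-(2*γ))) B volume := by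
      have := (e.integrableOn_comp_preimage he_emb
        (f := fun x : EuclideanSpace ℝ (Fin 3) => ‖x‖ ^ (-(2*γ)))
        (s := Metric.ball 0 1)).2 (aux_integrableOn h2γ0 h2γ3)
      rwa [hpre] at this
    have hval_B : ∫ w in B, ‖v - w‖ ^ (-(2*γ)) ≤ 4 * π := by
      have heq := e.setIntegral_preimage_emb he_emb
        (fun x : EuclideanSpace ℝ (Fin 3) => ‖x‖ ^ (-(2*γ))) (Metric.ball 0 1)
      rw [hpre] at heq
      rw [heq]
      exact aux_integral_le h2γ0 h2γ2
    have hh_L2 : MemLp h 2 (volume.restrict B) := by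
      refine (memLp_two_iff_integrable_sq hh_meas.aestronglyMeasurable).2 ?_
      have : (fun w => h w ^ 2) = fun w : EuclideanSpace ℝ (Fin 3) => ‖v - w‖ ^ (-(2*γ)) :=
        funext hh_sq
      rw [this]
      exact hI_B
    have hg_L2B : MemLp g 2 (volume.restrict B) := hf_wL2.restrict B
    have hgsq_int : Integrable (fun w => g w ^ 2) := hf_wL2.integrable_sq
    have hhsq_intB : Integrable (fun w => h w ^ 2) (volume.restrict B) := hh_L2.integrable_sq
    -- integrability of F
    have hFB : IntegrableOn F B volume := by
      refine Integrable.mono' ((hgsq_int.restrict.add hhsq_intB).div_const 2)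
        hF_meas.aestronglyMeasurable (ae_of_all _ fun w => ?_)
      rw [Real.norm_of_nonneg (hF_nn w), hF_eq]
      simp only [Pi.add_apply]
      nlinarith [sq_nonneg (g w - h w), hg_nn w, hh_nn w]
    have hFBc : IntegrableOn F Bᶜ volume := by
      refine Integrable.mono' hg_int.restrict hF_meas.aestronglyMeasurable ?_
      filter_upwards [ae_restrict_mem measurableSet_ball.compl] with w hw
      rw [Real.norm_of_nonneg (hF_nn w), hF_eq]
      have h1 : (1:ℝ) ≤ ‖v - w‖ := by
        simp only [hBdef, mem_compl_iff, Metric.mem_ball, dist_eq_norm, not_lt] at hw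
        rwa [norm_sub_rev]
      have hle1 : h w ≤ 1 :=
        Real.rpow_le_one_of_one_le_of_nonpos h1 (by linarith)
      nlinarith [hg_nn w, hh_nn w]
    have hF_int : Integrable F := by
      have := hFB.union hFBc
      rwa [union_compl_self, integrableOn_univ] at this
    -- split
    rw [← integral_add_compl (measurableSet_ball : MeasurableSet B) hF_int]
    -- compl part
    have hA_le : ∫ w in Bᶜ, F w ≤ 3 := by
      have step : ∫ w in Bᶜ, F w ≤ ∫ w in Bᶜ, g w := by
        refine integral_mono_ae hFBc hg_int.restrict ?_
        filter_upwards [ae_restrict_mem measurableSet_ball.compl] with w hw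
        rw [hF_eq]
        have h1 : (1:ℝ) ≤ ‖v - w‖ := by
          simp only [hBdef, mem_compl_iff, Metric.mem_ball, dist_eq_norm, not_lt] at hw
          rwa [norm_sub_rev]
        have hle1 : h w ≤ 1 :=
          Real.rpow_le_one_of_one_le_of_nonpos h1 (by linarith)
        nlinarith [hg_nn w, hh_nn w]
      have step2 : ∫ w in Bᶜ, g w ≤ ∫ w, g w :=
        setIntegral_le_integral hg_int (ae_of_all _ hg_nn)
      rw [hgdef] at step2
      rw [hf_mom2] at step2
      linarith
    -- ball part
    have hB_le : ∫ w in B, F w ≤ 2 * √π * L := by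
      have hconj : Real.HolderConjugate 2 2 := Real.holderConjugate_iff.mpr ⟨one_lt_two, by norm_num⟩
      have hO : ENNReal.ofReal (2:ℝ) = 2 := by
        simp [ENNReal.ofReal_ofNat]
      have hg_L2B' : MemLp g (ENNReal.ofReal 2) (volume.restrict B) := by rw [hO]; exact hg_L2B
      have hh_L2' : MemLp h (ENNReal.ofReal 2) (volume.restrict B) := by rw [hO]; exact hh_L2
      have hcs := integral_mul_le_Lp_mul_Lq_of_nonneg (μ := volume.restrict B) hconj
        (ae_of_all _ hg_nn) (ae_of_all _ hh_nn) hg_L2B' hh_L2'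
      have heqF : ∫ w in B, F w = ∫ w in B, g w * h w := by
        refine integral_congr_ae (ae_of_all _ fun w => ?_)
        exact hF_eq w
      -- bound 1
      have hb1 : (∫ w in B, g w ^ (2:ℝ)) ^ ((1:ℝ)/2) ≤ L := by
        have hmono : ∫ w in B, g w ^ (2:ℝ) ≤ ∫ w, g w ^ (2:ℝ) := by
          have e2 : (fun w : EuclideanSpace ℝ (Fin 3) => g w ^ (2:ℝ)) =
              fun w => g w ^ (2:ℕ) := funext fun w => by
            rw [show (2:ℝ) = ((2:ℕ):ℝ) by norm_num, Real.rpow_natCast]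
          rw [e2]
          exact setIntegral_le_integral hgsq_int (ae_of_all _ fun w => sq_nonneg _)
        have hLeq : L = (∫ w, ‖g w‖ ^ (2:ℝ)) ^ ((1:ℝ)/2) := by
          rw [hLdef, hf_wL2.eLpNorm_eq_integral_rpow_norm two_ne_zero ENNReal.ofNat_ne_top]
          rw [ENNReal.toReal_ofReal (by positivity)]
          norm_num
        have hnorm : (fun w => ‖g w‖ ^ (2:ℝ)) = fun w => g w ^ (2:ℝ) :=
          funext fun w => by rw [Real.norm_of_nonneg (hg_nn w)]
        rw [hLeq, hnorm]
        refine Real.rpow_le_rpow ?_ hmono (by norm_num)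
        exact setIntegral_nonneg measurableSet_ball fun w _ => Real.rpow_nonneg (hg_nn w) _
      -- bound 2
      have hb2 : (∫ w in B, h w ^ (2:ℝ)) ^ ((1:ℝ)/2) ≤ 2 * √π := by
        have hsq : ∫ w in B, h w ^ (2:ℝ) ≤ 4 * π := by
          have e2 : (fun w : EuclideanSpace ℝ (Fin 3) => h w ^ (2:ℝ)) =
              fun w => ‖v - w‖ ^ (-(2*γ)) := funext fun w => by
            rw [show (2:ℝ) = ((2:ℕ):ℝ) by norm_num, Real.rpow_natCast]
            exact hh_sq w
          rw [e2]
          exact hval_B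
        have h4π : ((4:ℝ) * π) ^ ((1:ℝ)/2) = 2 * √π := by
          rw [← Real.sqrt_eq_rpow, Real.sqrt_mul (by norm_num) π,
            show (4:ℝ) = 2^2 by norm_num, Real.sqrt_sq (by norm_num)]
        rw [← h4π]
        refine Real.rpow_le_rpow ?_ hsq (by norm_num)
        exact setIntegral_nonneg measurableSet_ball fun w _ => Real.rpow_nonneg (hh_nn w) _
      calc ∫ w in B, F w = ∫ w in B, g w * h w := heqF
        _ ≤ (∫ w in B, g w ^ (2:ℝ)) ^ ((1:ℝ)/2) * (∫ w in B, h w ^ (2:ℝ)) ^ ((1:ℝ)/2) := hcs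
        _ ≤ L * (2 * √π) := by
            refine mul_le_mul hb1 hb2 (Real.rpow_nonneg ?_ _) hL_nn
            exact setIntegral_nonneg measurableSet_ball fun w _ => Real.rpow_nonneg (hh_nn w) _
        _ = 2 * √π * L := by ring
    linarith
end

section
/- Let f : ℝ³ → [0,∞) with ∫ f = 1, ∫ |v|² f = 3, and f ∈ L²(ℝ³). Then for every γ ∈ [0,1], Σ_γ(f) := ∬ f(v) f(w) |v-w|^{-γ} |w|² dv dw ≤ 3·(1 + 2√π·‖f‖_{L²(ℝ³)}). -/
open MeasureTheory Real

section Aux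
open Metric ENNReal Set

noncomputable section
abbrev E3 := EuclideanSpace ℝ (Fin 3)

lemma volume_ball3 : volume (ball (0 : E3) 1) = ENNReal.ofReal (4/3*π) := by
  rw [EuclideanSpace.volume_ball]
  have h1 : (Fintype.card (Fin 3) : ℝ) = 3 := by simp
  have hs : Real.sqrt π * Real.sqrt π = π := Real.mul_self_sqrt pi_nonneg
  have hpos : 0 < Real.sqrt π := Real.sqrt_pos.2 pi_pos
  have hg : Real.Gamma ((Fintype.card (Fin 3) : ℝ) / 2 + 1) = 3/4 * Real.sqrt π := by
    rw [h1]
    rw [Real.Gamma_add_one (by norm_num)]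
    have : (3:ℝ)/2 = 1/2 + 1 := by norm_num
    rw [this, Real.Gamma_add_one (by norm_num), Real.Gamma_one_half_eq]
    ring
  rw [hg]
  simp only [Fintype.card_fin]
  rw [ENNReal.ofReal_one, one_pow, one_mul]
  congr 1
  field_simp
  nlinarith [hs, hpos]
lemma lintegral_norm_polar3 (F : ℝ → ℝ≥0∞) (hF : Measurable F) :
    ∫⁻ x : E3, F ‖x‖ =
      (3 : ℝ≥0∞) * volume (ball (0 : E3) 1) *
        ∫⁻ r in Set.Ioi (0:ℝ), ENNReal.ofReal (r ^ 2) * F r := by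
  have hdim : Module.finrank ℝ E3 = 3 := finrank_euclideanSpace_fin
  have h0 : (volume : Measure E3).restrict ({(0:E3)}ᶜ) = volume :=
    MeasureTheory.restrict_compl_singleton _
  have hg : Measurable fun p : sphere (0:E3) 1 × Ioi (0:ℝ) => F p.2.1 :=
    hF.comp (continuous_subtype_val.comp continuous_snd).measurable
  calc ∫⁻ x : E3, F ‖x‖
      = ∫⁻ x in ({(0:E3)}ᶜ), F ‖x‖ := by rw [h0]
    _ = ∫⁻ x : ({(0:E3)}ᶜ : Set E3), F ‖(x : E3)‖ ∂(volume.comap Subtype.val) :=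
        (lintegral_subtype_comap (measurableSet_singleton _).compl _).symm
    _ = ∫⁻ x : ({(0:E3)}ᶜ : Set E3), F (homeomorphUnitSphereProd E3 x).2.1
          ∂(volume.comap Subtype.val) := by
        refine lintegral_congr fun x => ?_
        simp
    _ = ∫⁻ p : sphere (0:E3) 1 × Ioi (0:ℝ), F p.2.1
          ∂((volume : Measure E3).toSphere.prod
              (Measure.volumeIoiPow (Module.finrank ℝ E3 - 1))) :=
        (Measure.measurePreserving_homeomorphUnitSphereProd volume).lintegral_comp hg
    _ = (volume : Measure E3).toSphere univ *
          ∫⁻ r : Ioi (0:ℝ), F r.1 ∂(Measure.volumeIoiPow 2) := by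
        rw [hdim, lintegral_prod _ hg.aemeasurable]
        simp [lintegral_const, mul_comm]
    _ = (3 : ℝ≥0∞) * volume (ball (0 : E3) 1) *
          ∫⁻ r : Ioi (0:ℝ), F r.1 ∂(Measure.volumeIoiPow 2) := by
        rw [Measure.toSphere_apply_univ, hdim]; norm_num
    _ = (3 : ℝ≥0∞) * volume (ball (0 : E3) 1) *
          ∫⁻ r in Set.Ioi (0:ℝ), ENNReal.ofReal (r ^ 2) * F r := by
        have h1 : Measurable fun r : Ioi (0:ℝ) => ENNReal.ofReal (r.1 ^ 2) := by
          measurability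
        have h2 : Measurable fun r : Ioi (0:ℝ) => F r.1 :=
          hF.comp measurable_subtype_coe
        have := lintegral_withDensity_eq_lintegral_mul
          (Measure.comap Subtype.val volume) h1 h2
        rw [Measure.volumeIoiPow, this,
          ← lintegral_subtype_comap measurableSet_Ioi (fun r : ℝ => ENNReal.ofReal (r ^ 2) * F r)]
        rfl

lemma radial_measurable : Measurable (fun r : ℝ => if r < 1 then ENNReal.ofReal (r ^ (-2:ℝ)) else 0) := by
  refine Measurable.ite measurableSet_Iio ?_ measurable_const
  exact ENNReal.measurable_ofReal.comp (by fun_prop)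

lemma lintegral_G : ∫⁻ x : E3, (if ‖x‖ < 1 then ENNReal.ofReal (‖x‖ ^ (-2:ℝ)) else 0) =
    ENNReal.ofReal (4*π) := by
  have := lintegral_norm_polar3 _ radial_measurable
  rw [this, volume_ball3]
  have hr : ∫⁻ r in Set.Ioi (0:ℝ),
      ENNReal.ofReal (r ^ 2) * (if r < 1 then ENNReal.ofReal (r ^ (-2:ℝ)) else 0) = 1 := by
    have hcong : ∀ r ∈ Set.Ioi (0:ℝ),
        ENNReal.ofReal (r ^ 2) * (if r < 1 then ENNReal.ofReal (r ^ (-2:ℝ)) else 0)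
          = (Set.Ioo (0:ℝ) 1).indicator (fun _ => 1) r := by
      intro r hr
      rw [Set.mem_Ioi] at hr
      by_cases h1 : r < 1
      · rw [if_pos h1, Set.indicator_of_mem (Set.mem_Ioo.2 ⟨hr, h1⟩)]
        rw [← ENNReal.ofReal_mul (by positivity)]
        rw [Real.rpow_neg hr.le, show ((2:ℝ)) = ((2:ℕ):ℝ) by norm_num, Real.rpow_natCast]
        rw [mul_inv_cancel₀ (by positivity)]
        simp
      · rw [if_neg h1, Set.indicator_of_notMem (fun h => h1 h.2), mul_zero]
    rw [setLIntegral_congr_fun_ae measurableSet_Ioi (ae_of_all _ hcong)]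
    rw [lintegral_indicator measurableSet_Ioo, Measure.restrict_restrict measurableSet_Ioo]
    have : Set.Ioo (0:ℝ) 1 ∩ Set.Ioi 0 = Set.Ioo 0 1 := by
      ext x
      simp +contextual [Set.mem_Ioo, Set.mem_Ioi, and_comm]
    rw [this]
    simp [Real.volume_Ioo]
  rw [hr, mul_one, ← ENNReal.ofReal_ofNat, ← ENNReal.ofReal_mul (by norm_num)]
  congr 1
  ring

lemma CS_ball (f : E3 → ℝ) (hf_nn : ∀ v, 0 ≤ f v) (hfm : AEStronglyMeasurable f volume)
    (γ : ℝ) (hγ0 : 0 ≤ γ) (hγ1 : γ ≤ 1) (w : E3) :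
    ∫⁻ v in ball w 1, ENNReal.ofReal (f v * ‖v - w‖ ^ (-γ)) ≤
      eLpNorm f 2 volume * ENNReal.ofReal (2 * Real.sqrt π) := by
  set F₁ : E3 → ℝ≥0∞ := fun v => ENNReal.ofReal (f v)
  set F₂ : E3 → ℝ≥0∞ := fun v => ENNReal.ofReal (‖v - w‖ ^ (-γ))
  have hmul : ∀ v, ENNReal.ofReal (f v * ‖v - w‖ ^ (-γ)) = (F₁ * F₂) v := by
    intro v
    simp only [F₁, F₂, Pi.mul_apply]
    rw [ENNReal.ofReal_mul (hf_nn v)]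
  have hF₂m : Measurable F₂ := by
    apply ENNReal.measurable_ofReal.comp
    fun_prop
  have hconj : Real.HolderConjugate 2 2 := by rw [Real.holderConjugate_iff]; norm_num
  calc ∫⁻ v in ball w 1, ENNReal.ofReal (f v * ‖v - w‖ ^ (-γ))
      = ∫⁻ v in ball w 1, (F₁ * F₂) v := by simp_rw [hmul]
    _ ≤ (∫⁻ v in ball w 1, F₁ v ^ (2:ℝ)) ^ (1/(2:ℝ)) *
        (∫⁻ v in ball w 1, F₂ v ^ (2:ℝ)) ^ (1/(2:ℝ)) :=
        ENNReal.lintegral_mul_le_Lp_mul_Lq _ hconj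
          (ENNReal.measurable_ofReal.comp_aemeasurable hfm.aemeasurable.restrict)
          hF₂m.aemeasurable
    _ ≤ eLpNorm f 2 volume * ENNReal.ofReal (2 * Real.sqrt π) := by
        gcongr
        · -- first factor ≤ eLpNorm
          have h1 : ∫⁻ v in ball w 1, F₁ v ^ (2:ℝ) ≤ ∫⁻ v, ‖f v‖ₑ ^ (2:ℝ) := by
            refine le_trans (setLIntegral_le_lintegral _ _)
              (le_of_eq (lintegral_congr fun v => ?_))
            congr 1
            rw [Real.enorm_eq_ofReal (hf_nn v)]
          rw [eLpNorm_eq_lintegral_rpow_enorm_toReal (by norm_num) (by norm_num),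
            ENNReal.toReal_ofNat]
          exact ENNReal.rpow_le_rpow h1 (by norm_num)
        · -- second factor
          have step1 : ∫⁻ v in ball w 1, F₂ v ^ (2:ℝ) ≤ ENNReal.ofReal (4*π) := by
            rw [← lintegral_G]
            rw [← lintegral_indicator measurableSet_ball]
            have htr := (measurePreserving_sub_right (volume : Measure E3) w).lintegral_comp
              (f := fun x : E3 => if ‖x‖ < 1 then ENNReal.ofReal (‖x‖ ^ (-2:ℝ)) else 0)
              (by
                refine Measurable.ite ?_ (ENNReal.measurable_ofReal.comp (by fun_prop))
                  measurable_const
                exact measurableSet_lt measurable_norm measurable_const)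
            rw [← htr]
            have hae : ∀ᵐ v : E3 ∂volume, v ≠ w := by
              rw [ae_iff]
              simp only [not_not, Set.setOf_eq_eq_singleton]
              exact measure_singleton w
            refine lintegral_mono_ae ?_
            filter_upwards [hae] with v hvw
            by_cases hv : v ∈ ball w 1
            · rw [Set.indicator_of_mem hv]
              have hlt : ‖v - w‖ < 1 := by rwa [mem_ball, dist_eq_norm] at hv
              have h0 : 0 < ‖v - w‖ := by
                rw [norm_pos_iff]
                exact sub_ne_zero.2 hvw
              show F₂ v ^ (2:ℝ) ≤
                (if ‖v - w‖ < 1 then ENNReal.ofReal (‖v - w‖ ^ (-2:ℝ)) else 0)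
              rw [if_pos hlt]
              simp only [F₂]
              rw [ENNReal.ofReal_rpow_of_nonneg (Real.rpow_nonneg (norm_nonneg _) _)
                (by norm_num)]
              apply ENNReal.ofReal_le_ofReal
              rw [← Real.rpow_mul (norm_nonneg _)]
              apply Real.rpow_le_rpow_of_exponent_ge h0 hlt.le
              nlinarith
            · rw [Set.indicator_of_notMem hv]
              exact zero_le
          calc (∫⁻ v in ball w 1, F₂ v ^ (2:ℝ)) ^ (1/(2:ℝ))
              ≤ (ENNReal.ofReal (4*π)) ^ (1/(2:ℝ)) := ENNReal.rpow_le_rpow step1 (by norm_num)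
            _ = ENNReal.ofReal (2 * Real.sqrt π) := by
                rw [ENNReal.ofReal_rpow_of_nonneg (by positivity) (by norm_num)]
                congr 1
                rw [← Real.sqrt_eq_rpow, show (4:ℝ)*π = 2^2*π by norm_num,
                  Real.sqrt_mul (by positivity), Real.sqrt_sq (by norm_num)]

lemma inner_bound (f : E3 → ℝ) (hf_nn : ∀ v, 0 ≤ f v) (hfm : AEStronglyMeasurable f volume)
    (hf_int : Integrable f) (hf_mass : ∫ v, f v = 1)
    (hfin : eLpNorm f 2 volume ≠ ∞)
    (γ : ℝ) (hγ0 : 0 ≤ γ) (hγ1 : γ ≤ 1) (w : E3) :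
    ∫⁻ v, ENNReal.ofReal (f v * ‖v - w‖ ^ (-γ)) ≤
      ENNReal.ofReal (1 + 2 * Real.sqrt π * (eLpNorm f 2 volume).toReal) := by
  have hpt : ∀ v, ENNReal.ofReal (f v * ‖v - w‖ ^ (-γ)) ≤
      ENNReal.ofReal (f v) +
        (ball w 1).indicator (fun v => ENNReal.ofReal (f v * ‖v - w‖ ^ (-γ))) v := by
    intro v
    by_cases hv : v ∈ ball w 1
    · rw [Set.indicator_of_mem hv]; exact le_add_self
    · rw [Set.indicator_of_notMem hv, add_zero]
      apply ENNReal.ofReal_le_ofReal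
      have h1 : 1 ≤ ‖v - w‖ := by
        rw [mem_ball, dist_eq_norm] at hv; linarith [not_lt.1 hv]
      nlinarith [Real.rpow_le_one_of_one_le_of_nonpos h1 (neg_nonpos.2 hγ0), hf_nn v,
        Real.rpow_nonneg (norm_nonneg (v-w)) (-γ)]
  have hone : ∫⁻ v, ENNReal.ofReal (f v) = ENNReal.ofReal 1 := by
    rw [← hf_mass]
    exact (ofReal_integral_eq_lintegral_ofReal hf_int (ae_of_all _ hf_nn)).symm
  calc ∫⁻ v, ENNReal.ofReal (f v * ‖v - w‖ ^ (-γ))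
      ≤ ∫⁻ v, (ENNReal.ofReal (f v) +
          (ball w 1).indicator (fun v => ENNReal.ofReal (f v * ‖v - w‖ ^ (-γ))) v) :=
        lintegral_mono hpt
    _ = (∫⁻ v, ENNReal.ofReal (f v)) +
        ∫⁻ v in ball w 1, ENNReal.ofReal (f v * ‖v - w‖ ^ (-γ)) := by
        rw [lintegral_add_left' (f := fun v => ENNReal.ofReal (f v)) hfm.aemeasurable.ennreal_ofReal,
          lintegral_indicator measurableSet_ball]
    _ ≤ ENNReal.ofReal 1 + eLpNorm f 2 volume * ENNReal.ofReal (2 * Real.sqrt π) := by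
        gcongr
        · exact hone.le
        · exact CS_ball f hf_nn hfm γ hγ0 hγ1 w
    _ = _ := by
        conv_lhs => rw [← ENNReal.ofReal_toReal hfin]
        rw [← ENNReal.ofReal_mul ENNReal.toReal_nonneg,
          ← ENNReal.ofReal_add (by norm_num) (by positivity)]
        congr 1
        ring

end

theorem Sigma_gamma_bound
    (f : EuclideanSpace ℝ (Fin 3) → ℝ)
    (hf_nn : ∀ v, 0 ≤ f v)
    (hf_mass : ∫ v, f v = 1)
    (hf_mom2 : ∫ v, ‖v‖ ^ (2 : ℕ) * f v = 3)
    (hf_L2 : MemLp f 2 volume)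
    (γ : ℝ) (hγ : γ ∈ Set.Icc (0 : ℝ) 1) :
    ∫ v, ∫ w, f v * f w * ‖v - w‖ ^ (-γ) * ‖w‖ ^ (2 : ℕ) ≤
      3 * (1 + 2 * Real.sqrt π * (eLpNorm f 2 volume).toReal) := by
  obtain ⟨hγ0, hγ1⟩ := hγ
  set K := (eLpNorm f 2 volume).toReal with hK
  have hfm : AEStronglyMeasurable f volume := hf_L2.1
  have hfin : eLpNorm f 2 volume ≠ ∞ := hf_L2.2.ne
  have hf_int : Integrable f := by
    by_contra h
    rw [integral_undef h] at hf_mass; norm_num at hf_mass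
  have hmom_int : Integrable (fun v : E3 => ‖v‖ ^ (2:ℕ) * f v) := by
    by_contra h
    rw [integral_undef h] at hf_mom2; norm_num at hf_mom2
  have hswap : (fun w : E3 => f w * ‖w‖ ^ (2:ℕ)) = fun v => ‖v‖ ^ (2:ℕ) * f v := by
    funext w; ring
  have hmom_int2 : Integrable (fun w : E3 => f w * ‖w‖ ^ (2:ℕ)) := by
    rw [hswap]; exact hmom_int
  have hmom2' : ∫ w : E3, f w * ‖w‖ ^ (2:ℕ) = 3 := by
    rw [hswap]; exact hf_mom2
  have hnn : ∀ (v w : E3), 0 ≤ f v * f w * ‖v - w‖ ^ (-γ) * ‖w‖ ^ (2:ℕ) := by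
    intro v w
    have := Real.rpow_nonneg (norm_nonneg (v - w)) (-γ)
    have h1 := hf_nn v; have h2 := hf_nn w
    positivity
  have hH : AEStronglyMeasurable
      (fun p : E3 × E3 => f p.1 * f p.2 * ‖p.1 - p.2‖ ^ (-γ) * ‖p.2‖ ^ (2:ℕ))
      (volume.prod volume) := by
    have h1 : AEStronglyMeasurable (fun p : E3 × E3 => f p.1) (volume.prod volume) := hfm.comp_fst
    have h2 : AEStronglyMeasurable (fun p : E3 × E3 => f p.2) (volume.prod volume) := hfm.comp_snd
    have h3 : AEStronglyMeasurable (fun p : E3 × E3 => ‖p.1 - p.2‖ ^ (-γ))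
        (volume.prod volume) := by
      apply Measurable.aestronglyMeasurable
      fun_prop
    have h4 : AEStronglyMeasurable (fun p : E3 × E3 => (‖p.2‖:ℝ) ^ (2:ℕ))
        (volume.prod volume) := by
      apply Measurable.aestronglyMeasurable
      fun_prop
    exact ((h1.mul h2).mul h3).mul h4
  set g : E3 → ℝ := fun v => ∫ w, f v * f w * ‖v - w‖ ^ (-γ) * ‖w‖ ^ (2:ℕ) with hg
  have hg_nn : ∀ v, 0 ≤ g v := fun v => integral_nonneg fun w => hnn v w
  have hg_meas : AEStronglyMeasurable g volume := hH.integral_prod_right'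
  have key : ∀ᵐ v ∂(volume : Measure E3), ENNReal.ofReal (g v) ≤
      ∫⁻ w, ENNReal.ofReal (f v * f w * ‖v - w‖ ^ (-γ) * ‖w‖ ^ (2:ℕ)) := by
    filter_upwards [hH.prodMk_left] with v hv
    simp only [hg]
    rw [integral_eq_lintegral_of_nonneg_ae (ae_of_all _ fun w => hnn v w) hv]
    exact ENNReal.ofReal_toReal_le
  have main : ∫⁻ v, ∫⁻ w, ENNReal.ofReal (f v * f w * ‖v - w‖ ^ (-γ) * ‖w‖ ^ (2:ℕ)) ≤
      ENNReal.ofReal (3 * (1 + 2 * Real.sqrt π * K)) := by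
    rw [lintegral_lintegral_swap
      (f := fun v w : E3 => ENNReal.ofReal (f v * f w * ‖v - w‖ ^ (-γ) * ‖w‖ ^ (2:ℕ)))
      (by exact hH.aemeasurable.ennreal_ofReal)]
    have hsplit : ∀ (w v : E3), ENNReal.ofReal (f v * f w * ‖v - w‖ ^ (-γ) * ‖w‖ ^ (2:ℕ)) =
        ENNReal.ofReal (f w * ‖w‖ ^ (2:ℕ)) * ENNReal.ofReal (f v * ‖v - w‖ ^ (-γ)) := by
      intro w v
      rw [← ENNReal.ofReal_mul (mul_nonneg (hf_nn w) (by positivity))]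
      congr 1
      ring
    calc ∫⁻ w, ∫⁻ v, ENNReal.ofReal (f v * f w * ‖v - w‖ ^ (-γ) * ‖w‖ ^ (2:ℕ))
        = ∫⁻ w, ENNReal.ofReal (f w * ‖w‖ ^ (2:ℕ)) *
            ∫⁻ v, ENNReal.ofReal (f v * ‖v - w‖ ^ (-γ)) := by
          refine lintegral_congr fun w => ?_
          simp_rw [hsplit w]
          exact lintegral_const_mul' _ _ ENNReal.ofReal_ne_top
      _ ≤ ∫⁻ w, ENNReal.ofReal (f w * ‖w‖ ^ (2:ℕ)) *
            ENNReal.ofReal (1 + 2 * Real.sqrt π * K) :=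
          lintegral_mono fun w => mul_le_mul_right
            (inner_bound f hf_nn hfm hf_int hf_mass hfin γ hγ0 hγ1 w) _
      _ = (∫⁻ w, ENNReal.ofReal (f w * ‖w‖ ^ (2:ℕ))) *
            ENNReal.ofReal (1 + 2 * Real.sqrt π * K) :=
          lintegral_mul_const' _ _ ENNReal.ofReal_ne_top
      _ = ENNReal.ofReal 3 * ENNReal.ofReal (1 + 2 * Real.sqrt π * K) := by
          rw [← ofReal_integral_eq_lintegral_ofReal hmom_int2
            (ae_of_all _ fun w => mul_nonneg (hf_nn w) (by positivity)), hmom2']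
      _ = ENNReal.ofReal (3 * (1 + 2 * Real.sqrt π * K)) :=
          (ENNReal.ofReal_mul (by norm_num)).symm
  calc ∫ v, g v = (∫⁻ v, ENNReal.ofReal (g v)).toReal :=
        integral_eq_lintegral_of_nonneg_ae (ae_of_all _ hg_nn) hg_meas
    _ ≤ 3 * (1 + 2 * Real.sqrt π * K) :=
        ENNReal.toReal_le_of_le_ofReal (by positivity)
          ((lintegral_mono_ae key).trans main)

end Aux

-- #print axioms Sigma_gamma_bound
end
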